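/- arXiv:1804.11012 — 2 statements merged into one kernel-verified Lean document; each statement's English description precedes it below -/
import Mathlib

section
/- Let λ ≥ 1 and let the shear rate γ̇ > 0. Set τ = (π/(2γ̇))(λ + 1/λ) and define the Jeffery orientation angle φ(t) = arctan((1/λ)·tan(λγ̇t/(λ² + 1))). Then the time-averaged two-dimensional order parameter over one quarter period satisfies (1/τ)·∫₀^τ (2·cos²(φ(t)) − 1) dt = (λ − 1)/(λ + 1). -/
open Real

private lemma jeffery_aux1 (l s co : ℝ) (hl : 1 ≤ l) (hco : co ≠ 0) (hpy : s^2 + co^2 = 1) :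
    2 * (1 / (1 + (1 / l * (s / co)) ^ 2)) - 1 =
      ((l^2 - 1) + (l^2 + 1) * (2 * co^2 - 1)) / ((l^2 + 1) + (l^2 - 1) * (2 * co^2 - 1)) := by
  have hl0 : l ≠ 0 := by positivity
  have h1 : 1 + (1 / l * (s / co)) ^ 2 ≠ 0 := by positivity
  have hdpos : 0 < l ^ 2 + 1 + (l ^ 2 - 1) * (2 * co ^ 2 - 1) := by
    nlinarith [sq_nonneg co, sq_nonneg (l*co)]
  field_simp
  ring_nf
  nlinarith [hpy, sq_nonneg s, sq_nonneg co]

set_option maxHeartbeats 1000000 in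
private lemma jeffery_aux2 (l g s co : ℝ) (hl : 1 < l) (hg : 0 < g) (hpy : s^2 + co^2 = 1) :
    ((l^2 - 1) + (l^2 + 1) * co) / ((l^2 + 1) + (l^2 - 1) * co) =
      (l - 1) / (l + 1) + 2 * (l^2 + 1) / ((l^2 - 1) * g) *
        (1 / (1 + ((l - 1) / (l + 1) * s / (1 + (l - 1) / (l + 1) * co)) ^ 2) *
          (((l - 1) / (l + 1) * (co * (2 * (l * g / (l ^ 2 + 1)))) * (1 + (l - 1) / (l + 1) * co)
            - (l - 1) / (l + 1) * s * ((l - 1) / (l + 1) * (-s * (2 * (l * g / (l ^ 2 + 1))))))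
            / (1 + (l - 1) / (l + 1) * co) ^ 2)) := by
  have hl1 : (0:ℝ) < l + 1 := by linarith
  have hb : (0:ℝ) < l ^ 2 - 1 := by nlinarith
  have hl2 : (0:ℝ) < l ^ 2 + 1 := by positivity
  set r := (l - 1) / (l + 1) with hr
  set cc := l * g / (l ^ 2 + 1) with hcc
  have hr0 : 0 ≤ r := div_nonneg (by linarith) (by linarith)
  have hr1 : r < 1 := by rw [hr, div_lt_one hl1]; linarith
  have hco1 : -1 ≤ co := by nlinarith
  have hd1 : 0 < 1 + r * co := by nlinarith [mul_nonneg hr0 (by linarith : (0:ℝ) ≤ co + 1)]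
  have hd2 : 0 < 1 + 2 * r * co + r ^ 2 := by
    nlinarith [sq_nonneg (1 - r), mul_nonneg hr0 (by linarith : (0:ℝ) ≤ co + 1)]
  have e1 : (r * (co * (2 * cc)) * (1 + r * co) - r * s * (r * (-s * (2 * cc))))
      = 2 * cc * r * (co + r) := by linear_combination (2 * cc * r ^ 2) * hpy
  have e2 : 1 + (r * s / (1 + r * co)) ^ 2 = (1 + 2 * r * co + r ^ 2) / (1 + r * co) ^ 2 := by
    field_simp
    linear_combination r ^ 2 * hpy
  rw [e1, e2]
  have e3 : 1 / ((1 + 2 * r * co + r ^ 2) / (1 + r * co) ^ 2) *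
      (2 * cc * r * (co + r) / (1 + r * co) ^ 2) = 2 * cc * r * (co + r) / (1 + 2 * r * co + r ^ 2) := by
    field_simp
  rw [e3]
  have hd3 : 0 < (l ^ 2 + 1) + (l ^ 2 - 1) * co := by nlinarith
  have eQ : 1 + 2 * r * co + r ^ 2 = 2 * ((l ^ 2 + 1) + (l ^ 2 - 1) * co) / (l + 1) ^ 2 := by
    rw [hr]; field_simp; ring
  rw [eQ, hr, hcc]
  have hd3' : (l ^ 2 + 1) + (l ^ 2 - 1) * co ≠ 0 := hd3.ne'
  field_simp
  ring

/-- The time-averaged two-dimensional order parameter of a Jeffery orbit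
`φ(t) = arctan((1/λ) tan(λ γ̇ t/(λ²+1)))` over `τ = (π/(2γ̇))(λ + 1/λ)`
equals `(λ-1)/(λ+1)`. -/
theorem jeffery_time_averaged_order_parameter (l g : ℝ) (hl : 1 ≤ l) (hg : 0 < g) :
    (1 / ((π / (2 * g)) * (l + 1 / l))) *
      ∫ t in (0:ℝ)..((π / (2 * g)) * (l + 1 / l)),
        (2 * (Real.cos (Real.arctan ((1 / l) * Real.tan (l * g * t / (l ^ 2 + 1))))) ^ 2 - 1)
      = (l - 1) / (l + 1) := by
  have hl0 : 0 < l := lt_of_lt_of_le one_pos hl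
  have hl0' : l ≠ 0 := hl0.ne'
  have hg' : g ≠ 0 := hg.ne'
  have hl2 : (0:ℝ) < l ^ 2 + 1 := by positivity
  set τ := (π / (2 * g)) * (l + 1 / l) with hτdef
  have hτpos : 0 < τ := by
    apply mul_pos (div_pos pi_pos (by linarith)) (by positivity)
  set c := l * g / (l ^ 2 + 1) with hc
  have hcpos : 0 < c := by positivity
  have hcτ : c * τ = π / 2 := by
    rw [hτdef, hc]; field_simp
  set h : ℝ → ℝ := fun t => ((l^2 - 1) + (l^2 + 1) * Real.cos (2 * (c * t))) /
      ((l^2 + 1) + (l^2 - 1) * Real.cos (2 * (c * t))) with hh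
  have hden : ∀ x : ℝ, 0 < (l^2 + 1) + (l^2 - 1) * Real.cos x := by
    intro x
    have h1 : 0 ≤ (l^2 - 1) * (Real.cos x + 1) := by
      apply mul_nonneg (by nlinarith) (by nlinarith [Real.neg_one_le_cos x])
    linarith
  have hcont : Continuous h := by
    apply Continuous.div (by fun_prop) (by fun_prop)
    exact fun t => (hden _).ne'
  have key : ∀ t : ℝ, Real.cos (c * t) ≠ 0 →
      2 * (Real.cos (Real.arctan ((1 / l) * Real.tan (l * g * t / (l ^ 2 + 1))))) ^ 2 - 1 = h t := by
    intro t hco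
    have hθ : l * g * t / (l ^ 2 + 1) = c * t := by rw [hc]; ring
    rw [hθ]
    show _ = ((l^2 - 1) + (l^2 + 1) * Real.cos (2 * (c * t))) /
      ((l^2 + 1) + (l^2 - 1) * Real.cos (2 * (c * t)))
    rw [Real.cos_two_mul, Real.tan_eq_sin_div_cos, Real.cos_sq_arctan]
    exact jeffery_aux1 l _ _ hl hco (Real.sin_sq_add_cos_sq (c*t))
  have hcongr : (∫ t in (0:ℝ)..τ,
        (2 * (Real.cos (Real.arctan ((1 / l) * Real.tan (l * g * t / (l ^ 2 + 1))))) ^ 2 - 1))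
      = ∫ t in (0:ℝ)..τ, h t := by
    apply intervalIntegral.integral_congr_ae
    rw [MeasureTheory.ae_iff]
    refine MeasureTheory.measure_mono_null ?_ (MeasureTheory.measure_singleton τ)
    intro t ht
    simp only [Set.mem_setOf_eq, not_forall] at ht
    obtain ⟨htmem, hne⟩ := ht
    by_contra htτ
    simp only [Set.mem_singleton_iff] at htτ
    rw [Set.uIoc_of_le hτpos.le] at htmem
    have ht1 : 0 < t := htmem.1
    have ht2 : t < τ := lt_of_le_of_ne htmem.2 htτ
    have hcos : 0 < Real.cos (c * t) := by
      apply Real.cos_pos_of_mem_Ioo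
      constructor
      · nlinarith [pi_pos, mul_pos hcpos ht1]
      · calc c * t < c * τ := by nlinarith
          _ = π / 2 := hcτ
    exact hne (key t hcos.ne')
  rw [hcongr]
  have hint : IntervalIntegrable h MeasureTheory.volume 0 τ :=
    hcont.intervalIntegrable 0 τ
  by_cases hl1 : l = 1
  · -- l = 1
    subst hl1
    have hcne : (2:ℝ) * c ≠ 0 := by positivity
    have hF : ∀ t ∈ Set.uIcc (0:ℝ) τ,
        HasDerivAt (fun t => Real.sin (2 * (c * t)) / (2 * c)) (h t) t := by
      intro t _
      have h1 : HasDerivAt (fun t : ℝ => 2 * (c * t)) (2 * c) t := by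
        simpa [mul_assoc] using (hasDerivAt_id t).const_mul (2 * c)
      have h2 : HasDerivAt (fun t => Real.sin (2 * (c * t))) (Real.cos (2 * (c * t)) * (2 * c)) t :=
        (Real.hasDerivAt_sin _).comp t h1
      have h3 := h2.div_const (2 * c)
      refine h3.congr_deriv ?_; symm
      show ((1:ℝ)^2 - 1 + ((1:ℝ)^2 + 1) * Real.cos (2 * (c * t))) /
        ((1:ℝ)^2 + 1 + ((1:ℝ)^2 - 1) * Real.cos (2 * (c * t)))
        = Real.cos (2 * (c * t)) * (2 * c) / (2 * c)
      rw [mul_div_assoc, div_self hcne, mul_one]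
      norm_num
    rw [intervalIntegral.integral_eq_sub_of_hasDerivAt hF hint]
    have hπx : 2 * (c * τ) = π := by rw [hcτ]; ring
    norm_num [hπx, Real.sin_pi]
  · -- l > 1
    have hlgt : 1 < l := lt_of_le_of_ne hl (Ne.symm hl1)
    have hb : (0:ℝ) < l^2 - 1 := by nlinarith
    set r := (l - 1) / (l + 1) with hr
    have hr0 : 0 < r := by apply div_pos <;> linarith
    have hr1 : r < 1 := by rw [hr, div_lt_one (by linarith)]; linarith
    set D := 2 * (l^2 + 1) / ((l^2 - 1) * g) with hD
    set F : ℝ → ℝ := fun t => r * t +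
        D * Real.arctan (r * Real.sin (2 * (c * t)) / (1 + r * Real.cos (2 * (c * t)))) with hF
    have hdpos : ∀ x : ℝ, 0 < 1 + r * Real.cos x := by
      intro x
      nlinarith [Real.neg_one_le_cos x, Real.cos_le_one x]
    have hFd : ∀ t ∈ Set.uIcc (0:ℝ) τ, HasDerivAt F (h t) t := by
      intro t _
      have h1 : HasDerivAt (fun t : ℝ => 2 * (c * t)) (2 * c) t := by
        simpa [mul_assoc] using (hasDerivAt_id t).const_mul (2 * c)
      have hs : HasDerivAt (fun t => Real.sin (2 * (c * t))) (Real.cos (2 * (c * t)) * (2 * c)) t :=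
        (Real.hasDerivAt_sin _).comp t h1
      have hcd : HasDerivAt (fun t => Real.cos (2 * (c * t))) (-Real.sin (2 * (c * t)) * (2 * c)) t :=
        (Real.hasDerivAt_cos _).comp t h1
      have hN : HasDerivAt (fun t => r * Real.sin (2 * (c * t)))
          (r * (Real.cos (2 * (c * t)) * (2 * c))) t := hs.const_mul r
      have hDen : HasDerivAt (fun t => 1 + r * Real.cos (2 * (c * t)))
          (r * (-Real.sin (2 * (c * t)) * (2 * c))) t := ((hcd.const_mul r).const_add 1)
      have hu : HasDerivAt (fun t => r * Real.sin (2 * (c * t)) / (1 + r * Real.cos (2 * (c * t))))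
          ((r * (Real.cos (2 * (c * t)) * (2 * c)) * (1 + r * Real.cos (2 * (c * t)))
            - r * Real.sin (2 * (c * t)) * (r * (-Real.sin (2 * (c * t)) * (2 * c))))
            / (1 + r * Real.cos (2 * (c * t)))^2) t :=
        hN.div hDen (hdpos _).ne'
      have ha := (Real.hasDerivAt_arctan
          (r * Real.sin (2 * (c * t)) / (1 + r * Real.cos (2 * (c * t))))).comp t hu
      have hid : HasDerivAt (fun t : ℝ => r * t) r t := by
        simpa using (hasDerivAt_id t).const_mul r
      have hfull := hid.add (ha.const_mul D)
      refine HasDerivAt.congr_deriv (f := F) hfull ?_; symm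
      show ((l^2 - 1) + (l^2 + 1) * Real.cos (2 * (c * t))) /
        ((l^2 + 1) + (l^2 - 1) * Real.cos (2 * (c * t))) = _
      exact jeffery_aux2 l g (Real.sin (2 * (c * t))) (Real.cos (2 * (c * t))) hlgt hg
        (Real.sin_sq_add_cos_sq (2 * (c * t)))
    rw [intervalIntegral.integral_eq_sub_of_hasDerivAt hFd hint]
    have hπx : 2 * (c * τ) = π := by rw [hcτ]; ring
    have hFτ : F τ = r * τ := by
      rw [hF]
      simp only [hπx, Real.sin_pi, Real.cos_pi]
      simp
    have hF0 : F 0 = 0 := by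
      rw [hF]; simp
    rw [hFτ, hF0, sub_zero, hr]
    have hτne : τ ≠ 0 := hτpos.ne'
    field_simp
end

section
/- Let x : ℝ → ℝ² be a twice continuously differentiable arclength-parametrized curve (|x'(s)| = 1 for all s), let t(s) = x'(s) be the unit tangent, n(s) = (x'₂(s), −x'₁(s)) the unit normal, and κ(s₀) = x''(s₀)·n(s₀) the signed curvature at a parameter value s₀. Define the double-layer kernel K(p, σ) = (1/π)·(((p − x(σ))·n(σ))/|p − x(σ)|²)·(((p − x(σ)) ⊗ (p − x(σ)))/|p − x(σ)|²) as a 2×2 matrix. Then lim_{σ → s₀} K(x(s₀), σ) = (κ(s₀)/(2π))·(t(s₀) ⊗ t(s₀)). -/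
open Real Filter Matrix Topology

/-- the 2D Stokes double-layer kernel
`K(p, σ) = (1/π) ((r·n(σ))/ρ²) ((r ⊗ r)/ρ²)` as a `2 × 2` matrix, where
`r = p − x(σ)`, `ρ = |r|`, and `n(σ) = (x'₂(σ), −x'₁(σ))` is the unit normal -/
noncomputable def dlKernel (x : ℝ → ℝ × ℝ) (p : ℝ × ℝ) (σ : ℝ) :
    Matrix (Fin 2) (Fin 2) ℝ :=
  ((1 / π) *
      (((p.1 - (x σ).1) * (deriv x σ).2 + (p.2 - (x σ).2) * (-(deriv x σ).1)) /
        ((p.1 - (x σ).1) ^ 2 + (p.2 - (x σ).2) ^ 2)) *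
      (1 / ((p.1 - (x σ).1) ^ 2 + (p.2 - (x σ).2) ^ 2))) •
    !![(p.1 - (x σ).1) * (p.1 - (x σ).1), (p.1 - (x σ).1) * (p.2 - (x σ).2);
       (p.2 - (x σ).2) * (p.1 - (x σ).1), (p.2 - (x σ).2) * (p.2 - (x σ).2)]

/-- For a `C²` arclength-parametrized plane curve `x` with unit tangent `t = x'`,
unit normal `n = (x'₂, −x'₁)`, and signed curvature `κ(s₀) = x''(s₀)·n(s₀)`, the
Stokes double-layer kernel `K(x(s₀), σ)` tends to `(κ(s₀)/(2π)) t(s₀) ⊗ t(s₀)`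
as `σ → s₀`. -/
theorem double_layer_kernel_diagonal_limit (x : ℝ → ℝ × ℝ)
    (hx : ContDiff ℝ 2 x)
    (harc : ∀ s : ℝ, (deriv x s).1 ^ 2 + (deriv x s).2 ^ 2 = 1) (s₀ : ℝ) :
    Tendsto (fun σ : ℝ => dlKernel x (x s₀) σ)
      (nhdsWithin s₀ {s₀}ᶜ)
      (nhds ((((deriv (deriv x) s₀).1 * (deriv x s₀).2 +
            (deriv (deriv x) s₀).2 * (-(deriv x s₀).1)) / (2 * π)) •
        !![(deriv x s₀).1 * (deriv x s₀).1, (deriv x s₀).1 * (deriv x s₀).2;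
           (deriv x s₀).2 * (deriv x s₀).1, (deriv x s₀).2 * (deriv x s₀).2])) := by
  -- regularity facts
  obtain ⟨hd1, hd2, hc2⟩ : Differentiable ℝ x ∧ Differentiable ℝ (deriv x) ∧
      Continuous (deriv (deriv x)) := by
    have h1 := contDiff_succ_iff_deriv.mp (show ContDiff ℝ (1+1) x by norm_num [hx])
    have h2 := contDiff_succ_iff_deriv.mp
      (show ContDiff ℝ (0+1) (deriv x) by norm_num [h1.2.2])
    exact ⟨h1.1, h2.1, h2.2.2.continuous⟩
  have hfst : ∀ s, HasDerivAt (fun σ => (x σ).1) (deriv x s).1 s := fun s => by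
    simpa using ((hd1 s).hasDerivAt.hasFDerivAt.fst).hasDerivAt
  have hsnd : ∀ s, HasDerivAt (fun σ => (x σ).2) (deriv x s).2 s := fun s => by
    simpa using ((hd1 s).hasDerivAt.hasFDerivAt.snd).hasDerivAt
  have hfst2 : ∀ s, HasDerivAt (fun σ => (deriv x σ).1) (deriv (deriv x) s).1 s := fun s => by
    simpa using ((hd2 s).hasDerivAt.hasFDerivAt.fst).hasDerivAt
  have hsnd2 : ∀ s, HasDerivAt (fun σ => (deriv x σ).2) (deriv (deriv x) s).2 s := fun s => by
    simpa using ((hd2 s).hasDerivAt.hasFDerivAt.snd).hasDerivAt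
  set l := nhdsWithin s₀ {s₀}ᶜ with hl
  set κ := (deriv (deriv x) s₀).1 * (deriv x s₀).2 +
      (deriv (deriv x) s₀).2 * (-(deriv x s₀).1) with hκ
  -- first order limits
  have hr1 : Tendsto (fun σ => ((x s₀).1 - (x σ).1) / (σ - s₀)) l
      (𝓝 (-(deriv x s₀).1)) := by
    have h := (hasDerivAt_iff_tendsto_slope.mp (hfst s₀)).neg
    refine h.congr fun σ => ?_
    simp [slope_def_field, neg_div, neg_sub]
    ring
  have hr2 : Tendsto (fun σ => ((x s₀).2 - (x σ).2) / (σ - s₀)) l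
      (𝓝 (-(deriv x s₀).2)) := by
    have h := (hasDerivAt_iff_tendsto_slope.mp (hsnd s₀)).neg
    refine h.congr fun σ => ?_
    simp [slope_def_field, neg_div, neg_sub]
    ring
  -- the squared distance limit
  have hR : Tendsto (fun σ =>
      (((x s₀).1 - (x σ).1) ^ 2 + ((x s₀).2 - (x σ).2) ^ 2) / (σ - s₀) ^ 2) l (𝓝 1) := by
    have h := (hr1.mul hr1).add (hr2.mul hr2)
    have h1 : -(deriv x s₀).1 * -(deriv x s₀).1 + -(deriv x s₀).2 * -(deriv x s₀).2 = 1 := by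
      have := harc s₀; nlinarith
    rw [h1] at h
    refine h.congr fun σ => ?_
    rw [div_mul_div_comm, div_mul_div_comm, ← add_div, ← sq, ← sq, ← sq]
  -- the numerator limit, via L'Hôpital
  have hFdiv : Tendsto (fun σ =>
      (((x s₀).1 - (x σ).1) * (deriv x σ).2 + ((x s₀).2 - (x σ).2) * (-(deriv x σ).1)) /
        (σ - s₀) ^ 2) l (𝓝 (κ / 2)) := by
    have hF' : ∀ s, HasDerivAt (fun σ =>
        ((x s₀).1 - (x σ).1) * (deriv x σ).2 + ((x s₀).2 - (x σ).2) * (-(deriv x σ).1))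
        (((x s₀).1 - (x s).1) * (deriv (deriv x) s).2 +
          ((x s₀).2 - (x s).2) * (-(deriv (deriv x) s).1)) s := by
      intro s
      have hA := (((hfst s).const_sub (x s₀).1).fun_mul (hsnd2 s))
      have hB := (((hsnd s).const_sub (x s₀).2).fun_mul (hfst2 s).fun_neg)
      refine (hA.fun_add hB).congr_deriv ?_
      ring
    have hg' : ∀ s : ℝ, HasDerivAt (fun σ => (σ - s₀) ^ 2) (2 * (s - s₀)) s := by
      intro s
      have := ((hasDerivAt_id s).sub_const s₀).fun_pow 2
      simpa using this
    refine HasDerivAt.lhopital_zero_nhdsNE (Eventually.of_forall fun s => hF' s)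
      (Eventually.of_forall fun s => hg' s) ?_ ?_ ?_ ?_
    · filter_upwards [self_mem_nhdsWithin] with s hs
      have : s - s₀ ≠ 0 := sub_ne_zero.mpr hs
      positivity
    · -- F tends to 0
      have hc : Continuous (fun σ =>
          ((x s₀).1 - (x σ).1) * (deriv x σ).2 + ((x s₀).2 - (x σ).2) * (-(deriv x σ).1)) := by
        have := hd1.continuous; have := hd2.continuous
        fun_prop
      have := (hc.tendsto s₀).mono_left (nhdsWithin_le_nhds (s := {s₀}ᶜ))
      simpa using this
    · have hc : Continuous fun σ : ℝ => (σ - s₀) ^ 2 := by fun_prop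
      have := (hc.tendsto s₀).mono_left (nhdsWithin_le_nhds (s := {s₀}ᶜ))
      simpa using this
    · -- limit of F'/g'
      have hcd1 : Tendsto (fun σ => (deriv (deriv x) σ).1) l (𝓝 ((deriv (deriv x) s₀).1)) :=
        ((continuous_fst.comp hc2).tendsto s₀).mono_left nhdsWithin_le_nhds
      have hcd2 : Tendsto (fun σ => (deriv (deriv x) σ).2) l (𝓝 ((deriv (deriv x) s₀).2)) :=
        ((continuous_snd.comp hc2).tendsto s₀).mono_left nhdsWithin_le_nhds
      have h := ((hr1.mul hcd2).add (hr2.mul hcd1.neg)).div_const 2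
      have heq : (-(deriv x s₀).1 * (deriv (deriv x) s₀).2 +
          ((-(deriv x s₀).2) * -(deriv (deriv x) s₀).1)) / 2 = κ / 2 := by
        rw [hκ]; ring
      rw [heq] at h
      refine h.congr fun σ => ?_
      have hne : σ - s₀ = σ - s₀ := rfl
      field_simp
  -- eventual nonvanishing
  have hne : ∀ᶠ σ in l, σ ≠ s₀ := self_mem_nhdsWithin
  have hpos : ∀ᶠ σ in l,
      0 < (((x s₀).1 - (x σ).1) ^ 2 + ((x s₀).2 - (x σ).2) ^ 2) / (σ - s₀) ^ 2 :=
    hR.eventually (eventually_gt_nhds (by norm_num))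
  have hRne : ∀ᶠ σ in l, (((x s₀).1 - (x σ).1) ^ 2 + ((x s₀).2 - (x σ).2) ^ 2) ≠ 0 := by
    filter_upwards [hpos] with σ hσ
    intro h0
    rw [h0] at hσ
    simp at hσ
  -- key scalar limit
  have key : ∀ (a b : ℝ → ℝ) (la lb : ℝ),
      Tendsto (fun σ => a σ / (σ - s₀)) l (𝓝 la) →
      Tendsto (fun σ => b σ / (σ - s₀)) l (𝓝 lb) →
      Tendsto (fun σ => (1 / π *
        ((((x s₀).1 - (x σ).1) * (deriv x σ).2 + ((x s₀).2 - (x σ).2) * (-(deriv x σ).1)) /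
          (((x s₀).1 - (x σ).1) ^ 2 + ((x s₀).2 - (x σ).2) ^ 2)) *
        (1 / (((x s₀).1 - (x σ).1) ^ 2 + ((x s₀).2 - (x σ).2) ^ 2))) * (a σ * b σ)) l
        (𝓝 (κ / (2 * π) * (la * lb))) := by
    intro a b la lb ha hb
    have hmain := (tendsto_const_nhds (x := (1:ℝ)/π)).mul (hFdiv.div hR one_ne_zero)
      |>.mul (((ha.mul hb).div hR one_ne_zero))
    have heq : 1 / π * (κ / 2 / 1) * (la * lb / 1) = κ / (2 * π) * (la * lb) := by ring
    rw [heq] at hmain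
    refine hmain.congr' ?_
    filter_upwards [hne, hRne] with σ hσ hRσ
    have hh : σ - s₀ ≠ 0 := sub_ne_zero.mpr hσ
    simp only [Pi.div_apply]
    field_simp
  -- assemble the matrix limit
  refine tendsto_pi_nhds.mpr ?_
  intro i
  refine tendsto_pi_nhds.mpr ?_
  intro j
  fin_cases i <;> fin_cases j <;>
    simp only [dlKernel, Matrix.smul_apply, smul_eq_mul, Matrix.cons_val', Matrix.cons_val_zero,
      Matrix.cons_val_one, Matrix.head_cons, Matrix.empty_val', Matrix.cons_val_fin_one,
      Matrix.head_fin_const, Matrix.of_apply, Fin.mk_zero, Fin.mk_one, Fin.isValue]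
  · have h := key _ _ _ _ hr1 hr1
    convert h using 2 <;> ring
  · have h := key _ _ _ _ hr1 hr2
    convert h using 2 <;> ring
  · have h := key _ _ _ _ hr2 hr1
    convert h using 2 <;> ring
  · have h := key _ _ _ _ hr2 hr2
    convert h using 2 <;> ring
end
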